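/- Let 1/2 < a₀ ≤ 1 and b₀ > 0, and for an even integer N ≥ 2 define Ū_n = (cos(b₀ log n) - 2^{1-a₀}·cos(b₀ log(2n)))/n^{a₀} for n ≤ N/2 and Ū_n = cos(b₀ log n)/n^{a₀} for N/2 < n ≤ N, and similarly V̄_n with sin in place of cos. Then ∑_{n=1}^{N} (Ū_n² + V̄_n²) = ∑_{n=1}^{N} 1/n^{2a₀} + (2^{2-2a₀} - 2^{2-a₀}·cos(b₀ log 2)) · ∑_{n=1}^{N/2} 1/n^{2a₀}. -/

import Mathlib

theorem sum_of_squares_twisted (a₀ b₀ : ℝ) (ha : 1 / 2 < a₀) (ha' : a₀ ≤ 1) (hb : 0 < b₀)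
    (N : ℕ) (hN : 2 ≤ N) (hEven : Even N)
    (U V : ℕ → ℝ)
    (hU : ∀ n : ℕ, (n ≤ N / 2 →
        U n = (Real.cos (b₀ * Real.log n) - 2 ^ (1 - a₀) * Real.cos (b₀ * Real.log (2 * n))) /
          (n : ℝ) ^ a₀) ∧
      (N / 2 < n → U n = Real.cos (b₀ * Real.log n) / (n : ℝ) ^ a₀))
    (hV : ∀ n : ℕ, (n ≤ N / 2 →
        V n = (Real.sin (b₀ * Real.log n) - 2 ^ (1 - a₀) * Real.sin (b₀ * Real.log (2 * n))) /
          (n : ℝ) ^ a₀) ∧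
      (N / 2 < n → V n = Real.sin (b₀ * Real.log n) / (n : ℝ) ^ a₀)) :
    ∑ n ∈ Finset.Icc 1 N, ((U n) ^ 2 + (V n) ^ 2) =
      ∑ n ∈ Finset.Icc 1 N, 1 / (n : ℝ) ^ (2 * a₀) +
        ((2 : ℝ) ^ (2 - 2 * a₀) - 2 ^ (2 - a₀) * Real.cos (b₀ * Real.log 2)) *
          ∑ n ∈ Finset.Icc 1 (N / 2), 1 / (n : ℝ) ^ (2 * a₀) := by
  set C : ℝ := (2 : ℝ) ^ (2 - 2 * a₀) - 2 ^ (2 - a₀) * Real.cos (b₀ * Real.log 2) with hC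
  have hM : N / 2 ≤ N := Nat.div_le_self N 2
  have hsplit : Finset.Icc 1 N = Finset.Icc 1 (N / 2) ∪ Finset.Ioc (N / 2) N := by
    ext x
    simp only [Finset.mem_Icc, Finset.mem_union, Finset.mem_Ioc]
    omega
  have hdisj : Disjoint (Finset.Icc 1 (N / 2)) (Finset.Ioc (N / 2) N) := by
    rw [Finset.disjoint_left]
    intro a h1 h2
    simp only [Finset.mem_Icc, Finset.mem_Ioc] at h1 h2
    omega
  rw [hsplit, Finset.sum_union hdisj, Finset.sum_union hdisj]
  have hsq : ∀ n : ℕ, 1 ≤ n → ((n : ℝ) ^ a₀) ^ 2 = (n : ℝ) ^ (2 * a₀) := by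
    intro n hn
    have hn0 : (0 : ℝ) < (n : ℝ) := by exact_mod_cast hn
    rw [sq, ← Real.rpow_add hn0]
    ring_nf
  have hpos : ∀ n : ℕ, 1 ≤ n → (0 : ℝ) < (n : ℝ) ^ a₀ := by
    intro n hn
    exact Real.rpow_pos_of_pos (by exact_mod_cast hn) a₀
  have h2 : ∑ n ∈ Finset.Ioc (N / 2) N, ((U n) ^ 2 + (V n) ^ 2) =
      ∑ n ∈ Finset.Ioc (N / 2) N, 1 / (n : ℝ) ^ (2 * a₀) := by
    apply Finset.sum_congr rfl
    intro n hn
    simp only [Finset.mem_Ioc] at hn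
    have hn1 : 1 ≤ n := by omega
    rw [(hU n).2 hn.1, (hV n).2 hn.1, div_pow, div_pow, ← add_div,
      hsq n hn1, Real.cos_sq_add_sin_sq]
  have h1 : ∑ n ∈ Finset.Icc 1 (N / 2), ((U n) ^ 2 + (V n) ^ 2) =
      ∑ n ∈ Finset.Icc 1 (N / 2), 1 / (n : ℝ) ^ (2 * a₀) +
      C * ∑ n ∈ Finset.Icc 1 (N / 2), 1 / (n : ℝ) ^ (2 * a₀) := by
    rw [Finset.mul_sum, ← Finset.sum_add_distrib]
    apply Finset.sum_congr rfl
    intro n hn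
    simp only [Finset.mem_Icc] at hn
    have hn1 : 1 ≤ n := hn.1
    have hn0 : (0 : ℝ) < (n : ℝ) := by exact_mod_cast hn1
    have hlog : Real.log (2 * (n : ℝ)) = Real.log 2 + Real.log n :=
      Real.log_mul two_ne_zero (ne_of_gt hn0)
    rw [(hU n).1 hn.2, (hV n).1 hn.2, div_pow, div_pow, ← add_div, hsq n hn1]
    have hc2 : ((2 : ℝ) ^ (1 - a₀)) ^ 2 = (2 : ℝ) ^ (2 - 2 * a₀) := by
      rw [sq, ← Real.rpow_add two_pos]; ring_nf
    have hc1 : (2 : ℝ) ^ (2 - a₀) = 2 * (2 : ℝ) ^ (1 - a₀) := by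
      rw [show (2 : ℝ) - a₀ = 1 + (1 - a₀) by ring, Real.rpow_add two_pos,
        Real.rpow_one]
    have hnum : (Real.cos (b₀ * Real.log n) -
          2 ^ (1 - a₀) * Real.cos (b₀ * Real.log (2 * n))) ^ 2 +
        (Real.sin (b₀ * Real.log n) -
          2 ^ (1 - a₀) * Real.sin (b₀ * Real.log (2 * n))) ^ 2 = 1 + C := by
      rw [hC, hlog, mul_add, Real.cos_add, Real.sin_add, ← hc2, hc1]
      have p1 := Real.sin_sq_add_cos_sq (b₀ * Real.log n)
      have p2 := Real.sin_sq_add_cos_sq (b₀ * Real.log 2)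
      linear_combination
        (1 + ((2:ℝ) ^ (1 - a₀)) ^ 2 * (Real.sin (b₀ * Real.log 2) ^ 2 +
            Real.cos (b₀ * Real.log 2) ^ 2) -
          2 * (2:ℝ) ^ (1 - a₀) * Real.cos (b₀ * Real.log 2)) * p1 +
        ((2:ℝ) ^ (1 - a₀)) ^ 2 * p2
    rw [hnum]
    field_simp
  rw [h1, h2]
  ring
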